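/- There exists a finite simple graph T that is a tree (connected and acyclic) in which every vertex has degree at most 4, such that there is no injective map f from the vertices of T to ℤ × ℤ with the property that whenever u and v are adjacent in T, the images f(u) and f(v) are at L1-distance 1 in ℤ × ℤ. -/

import Mathlib

/-- Parent function for our 17-vertex tree: root `0`, children `1..4`,
and grandchildren `5..16` (three per child). -/
def par : Fin 17 → Fin 17 := fun v =>
  if h : v.val ≤ 4 then 0 else ⟨(v.val - 5) / 3 + 1, by omega⟩

/-- The tree graph. -/
def Tgraph : SimpleGraph (Fin 17) where
  Adj u v := (par u = v ∧ u ≠ 0) ∨ (par v = u ∧ v ≠ 0)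
  symm := by constructor; intro u v h; tauto
  loopless := by
    have : ∀ u : Fin 17, ¬(par u = u ∧ u ≠ 0 ∨ par u = u ∧ u ≠ 0) := by decide
    constructor
    intro v
    exact this v

instance : DecidableRel Tgraph.Adj := fun u v =>
  inferInstanceAs (Decidable ((par u = v ∧ u ≠ 0) ∨ (par v = u ∧ v ≠ 0)))

/-- Descendant predicate (depth ≤ 2). -/
def descOf (c u : Fin 17) : Prop :=
  u = c ∨ (u ≠ 0 ∧ (par u = c ∨ (par u ≠ 0 ∧ par (par u) = c)))

instance (c u : Fin 17) : Decidable (descOf c u) :=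
  inferInstanceAs (Decidable (_ ∨ _))

lemma Tkey : ∀ v : Fin 17, v ≠ 0 → Tgraph.Adj (par v) v := by decide

lemma Tpp : ∀ v : Fin 17, par (par v) = 0 := by decide

/-- An invariant along reachability. -/
lemma comp_invariant {V : Type} {G : SimpleGraph V} {p : V → Prop}
    (h : ∀ a b, G.Adj a b → (p a ↔ p b)) {x y : V} (r : G.Reachable x y) :
    p x ↔ p y := by
  obtain ⟨w⟩ := r
  induction w with
  | nil => rfl
  | cons ha _ ih => exact (h _ _ ha).trans ih

lemma Thkey : ∀ c a b : Fin 17, c ≠ 0 → Tgraph.Adj a b →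
    ¬((a = c ∧ b = par c) ∨ (a = par c ∧ b = c)) → (descOf c a ↔ descOf c b) := by
  decide

lemma Tconn : Tgraph.Connected := by
  have reach0 : ∀ v : Fin 17, Tgraph.Reachable 0 v := by
    intro v
    by_cases h0 : v = 0
    · subst h0; exact SimpleGraph.Reachable.refl _
    · by_cases h1 : par v = 0
      · exact (h1 ▸ Tkey v h0).reachable
      · have h2 := Tkey (par v) h1
        rw [Tpp v] at h2
        exact h2.reachable.trans (Tkey v h0).reachable
  constructor
  intro u v
  exact (reach0 u).symm.trans (reach0 v)

lemma bridge_child (c : Fin 17) (hc : c ≠ 0) :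
    ¬(Tgraph \ SimpleGraph.fromEdgeSet {s(c, par c)}).Reachable c (par c) := by
  intro hr
  have inv : descOf c c ↔ descOf c (par c) := by
    refine comp_invariant (p := descOf c) ?_ hr
    intro a b hab
    simp only [SimpleGraph.sdiff_adj, SimpleGraph.fromEdgeSet_adj,
      Set.mem_singleton_iff] at hab
    obtain ⟨hab1, hab2⟩ := hab
    apply Thkey c a b hc hab1
    intro hcases
    apply hab2
    refine ⟨?_, hab1.ne⟩
    rcases hcases with ⟨rfl, rfl⟩ | ⟨rfl, rfl⟩
    · rfl
    · exact Sym2.eq_swap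
  have h1 : descOf c c := Or.inl rfl
  have h2 : ∀ d : Fin 17, d ≠ 0 → ¬ descOf d (par d) := by decide
  exact h2 c hc (inv.mp h1)

lemma Tacyclic : Tgraph.IsAcyclic := by
  rw [SimpleGraph.isAcyclic_iff_forall_adj_isBridge]
  intro v w h
  rw [SimpleGraph.isBridge_iff]
  rcases h with ⟨h1, h2⟩ | ⟨h1, h2⟩
  · rw [← h1]
    exact bridge_child v h2
  · intro hr
    exact bridge_child w h2 (by rw [h1, Sym2.eq_swap]; exact hr.symm)

/-- The 13 points of the L1-ball of radius 2 around the origin. -/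
def ball2 : Finset (ℤ × ℤ) :=
  {(0,0),(1,0),(-1,0),(0,1),(0,-1),(2,0),(-2,0),(0,2),(0,-2),(1,1),(1,-1),(-1,1),(-1,-1)}

lemma mem_ball2 (a b : ℤ) (h : |a| + |b| ≤ 2) : (a, b) ∈ ball2 := by
  simp only [ball2, Finset.mem_insert, Finset.mem_singleton, Prod.mk.injEq]
  rcases abs_cases a with ⟨ha1, ha2⟩ | ⟨ha1, ha2⟩ <;>
    rcases abs_cases b with ⟨hb1, hb2⟩ | ⟨hb1, hb2⟩ <;>
    rw [ha1, hb1] at h <;> omega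

lemma tri (a b c : ℤ × ℤ) (h1 : |a.1 - b.1| + |a.2 - b.2| = 1)
    (h2 : |b.1 - c.1| + |b.2 - c.2| = 1) : |a.1 - c.1| + |a.2 - c.2| ≤ 2 := by
  have t1 := abs_sub_le a.1 b.1 c.1
  have t2 := abs_sub_le a.2 b.2 c.2
  linarith

/-- There exists a finite tree with maximum degree at most 4 that cannot be
embedded as a subgraph into the square grid graph on `ℤ × ℤ` (adjacency = L1-distance 1). -/
theorem stmt10 :
    ∃ (V : Type) (_ : Fintype V) (T : SimpleGraph V),
      T.IsTree ∧ (∀ v : V, (T.neighborSet v).ncard ≤ 4) ∧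
      ¬ ∃ f : V → ℤ × ℤ, Function.Injective f ∧
          ∀ u v : V, T.Adj u v →
            |(f u).1 - (f v).1| + |(f u).2 - (f v).2| = 1 := by
  refine ⟨Fin 17, inferInstance, Tgraph, ⟨Tconn, Tacyclic⟩, ?_, ?_⟩
  · intro v
    rw [Set.ncard_eq_toFinset_card']
    revert v
    decide
  · rintro ⟨f, hinj, hf⟩
    have hd : ∀ v : Fin 17, v ≠ 0 →
        |(f v).1 - (f (par v)).1| + |(f v).2 - (f (par v)).2| = 1 := by
      intro v hv
      exact hf v (par v) (Tkey v hv).symm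
    have hbound : ∀ v : Fin 17,
        |(f v).1 - (f 0).1| + |(f v).2 - (f 0).2| ≤ 2 := by
      intro v
      by_cases h0 : v = 0
      · subst h0; simp
      · by_cases h1 : par v = 0
        · have := hd v h0; rw [h1] at this; omega
        · have e1 := hd v h0
          have e2 := hd (par v) h1
          rw [Tpp v] at e2
          exact tri (f v) (f (par v)) (f 0) e1 e2
    have hcard : (Finset.univ : Finset (Fin 17)).card ≤ ball2.card := by
      apply Finset.card_le_card_of_injOn
        (fun v => ((f v).1 - (f 0).1, (f v).2 - (f 0).2))
      · intro v _
        exact mem_ball2 _ _ (hbound v)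
      · intro x _ y _ hxy
        simp only [Prod.mk.injEq] at hxy
        apply hinj
        have h1 : (f x).1 = (f y).1 := by omega
        have h2 : (f x).2 = (f y).2 := by omega
        exact Prod.ext h1 h2
    simp only [Finset.card_univ, Fintype.card_fin] at hcard
    have : ball2.card = 13 := by decide
    omega
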